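/- Under the staircase hypotheses, assume Y is invertible and Y2 is invertible. Then for all complex numbers λ and μ one has det(λY + μX) = λ^{n−k} · det Y · det(λ·1_k + μ·U), where 1_k is the k×k identity matrix. -/

import Mathlib

open Matrix Finset

noncomputable section

/-- The determinant of the minor of the `ℕ`-indexed (0-based) matrix `Φ` on the 1-based
row/column range `[i, M]`; for `i = M + 1` this is the determinant of the empty matrix, `1`. -/
def sminor {α : Type*} [CommRing α] (Φ : ℕ → ℕ → α) (i M : ℕ) : α :=
  (Matrix.of fun r c : Fin (M + 1 - i) => Φ (i - 1 + (r : ℕ)) (i - 1 + (c : ℕ))).det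

/-- Package an `ℕ`-indexed (0-based) family of entries as an `n × n` matrix. -/
def toSq {α : Type*} (n : ℕ) (f : ℕ → ℕ → α) : Matrix (Fin n) (Fin n) α :=
  Matrix.of fun i j => f (i : ℕ) (j : ℕ)

/-- The core `Φ` of a staircase pair `(X, Y)` of `n × n` matrices with parameters
`a = k + b`; it is an `N × N` matrix, `N = (k-1)*n + b`, given here as a (0-based)
`ℕ`-indexed family of entries.  For `1 ≤ j ≤ k-1` (1-based), the block rows
`(j-1)(n-1)+1 .. j(n-1)` carry `Y_{[2,n]}` in columns `(j-1)n+1 .. jn` and (for `j ≥ 2`)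
`X_{[2,n]}` in columns `(j-2)n+1 .. (j-1)n`; the last `a - 1` rows carry `X_{[2,a]}` in
columns `(k-2)n+1 .. (k-1)n` and `Y_{[2,a]}^{[1,b]}` in columns `(k-1)n+1 .. N`. -/
def stairCore {α : Type*} [Zero α] (n k : ℕ) (Xf Yf : ℕ → ℕ → α) : ℕ → ℕ → α := fun r c =>
  if r < (k - 1) * (n - 1) then
    if r / (n - 1) * n ≤ c ∧ c < r / (n - 1) * n + n then
      Yf (r % (n - 1) + 1) (c - r / (n - 1) * n)
    else if 1 ≤ r / (n - 1) ∧ (r / (n - 1) - 1) * n ≤ c ∧ c < r / (n - 1) * n then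
      Xf (r % (n - 1) + 1) (c - (r / (n - 1) - 1) * n)
    else 0
  else
    if (k - 2) * n ≤ c ∧ c < (k - 1) * n then
      Xf (r - (k - 1) * (n - 1) + 1) (c - (k - 2) * n)
    else if (k - 1) * n ≤ c then
      Yf (r - (k - 1) * (n - 1) + 1) (c - (k - 1) * n)
    else 0

/-- `det Ȳ`: determinant of the submatrix of `Y` on rows and columns `2..n` (1-based). -/
def detYbar {α : Type*} [CommRing α] (n : ℕ) (Yf : ℕ → ℕ → α) : α :=
  (Matrix.of fun i j : Fin (n - 1) => Yf ((i : ℕ) + 1) ((j : ℕ) + 1)).det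

/-- Determinant of the minor of `Y` on rows `{1, 3, 4, …, n}` and columns `{2, …, n}`
(1-based). -/
def detYgamma {α : Type*} [CommRing α] (n : ℕ) (Yf : ℕ → ℕ → α) : α :=
  (Matrix.of fun i j : Fin (n - 1) =>
    Yf (if (i : ℕ) = 0 then 0 else (i : ℕ) + 1) ((j : ℕ) + 1)).det

/-- `det (λ Y + μ X)` as a polynomial in the two variables `λ = X 0`, `μ = X 1`. -/
def detLM {α : Type*} [CommRing α] (n : ℕ) (Xf Yf : ℕ → ℕ → α) :
    MvPolynomial (Fin 2) α :=
  Matrix.det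
    (((MvPolynomial.X 0 : MvPolynomial (Fin 2) α) • (toSq n Yf).map (fun p => MvPolynomial.C p)
      + (MvPolynomial.X 1 : MvPolynomial (Fin 2) α) • (toSq n Xf).map (fun p => MvPolynomial.C p)
      : Matrix (Fin n) (Fin n) (MvPolynomial (Fin 2) α)))

/-- The block `Y2`: submatrix of `Y` on rows `k+1 .. k+b` and columns `1 .. b` (1-based). -/
def blockY2 (n k b : ℕ) (h : k + b ≤ n) (Y : Matrix (Fin n) (Fin n) ℂ) :
    Matrix (Fin b) (Fin b) ℂ :=
  Matrix.of fun i j => Y ⟨k + (i : ℕ), by have := i.isLt; omega⟩ (Fin.castLE (by omega) j)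

/-- The `k × k` matrix `U = W11 - Y1 Y2⁻¹ W21` attached to a staircase pair `(X, Y)`,
where `[[W11, W12], [W21, W22]]` is the `a × a` leading block of `X Y⁻¹` (`W11` of size
`k × k`) and `[Y1; Y2]` is the submatrix of `Y` on rows `1..a`, columns `1..b`. -/
def blockU (n k b : ℕ) (h : k + b ≤ n) (X Y : Matrix (Fin n) (Fin n) ℂ) :
    Matrix (Fin k) (Fin k) ℂ :=
  (Matrix.of fun i j : Fin k =>
      (X * Y⁻¹) (Fin.castLE (by omega) i) (Fin.castLE (by omega) j))
    - (Matrix.of fun (i : Fin k) (j : Fin b) =>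
          Y (Fin.castLE (by omega) i) (Fin.castLE (by omega) j))
      * (blockY2 n k b h Y)⁻¹
      * (Matrix.of fun (i : Fin b) (j : Fin k) =>
          (X * Y⁻¹) ⟨k + (i : ℕ), by have := i.isLt; omega⟩ (Fin.castLE (by omega) j))

/-- The standard basis vector `e_{m+1}` (so `basisVec k 0 = e_1`, `basisVec k 1 = e_2`). -/
def basisVec (k m : ℕ) : Fin k → ℂ := fun i => if (i : ℕ) = m then 1 else 0

/-- The vector `v_γ = U (e_2 + γ e_1)`, with `γ` the ratio of the minor of `Y` on rows
`{1,3,…,n}`, columns `{2,…,n}` by `det Ȳ`. -/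
def vGamma (n k b : ℕ) (h : k + b ≤ n) (X Y : ℕ → ℕ → ℂ) : Fin k → ℂ :=
  (blockU n k b h (toSq n X) (toSq n Y)).mulVec
    (basisVec k 1 + (detYgamma n Y / detYbar n Y) • basisVec k 0)

/-- The coefficient ring for the generic staircase pair: polynomials over `ℂ` in the
variables `x_{ij}` (tagged `true`) and `y_{ij}` (tagged `false`). -/
abbrev Rgen : Type := MvPolynomial (Bool × ℕ × ℕ) ℂ

/-- The generic staircase matrix `X` (0-based): `x_{ij}` for `i < a`, `b ≤ j < n`, else `0`. -/
def genX (n a b : ℕ) : ℕ → ℕ → Rgen := fun i j =>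
  if i < a ∧ b ≤ j ∧ j < n then MvPolynomial.X (true, i, j) else 0

/-- The generic staircase matrix `Y` (0-based): `y_{ij}` except in the zero block
(`i ≥ a`, `j < b`). -/
def genY (n a b : ℕ) : ℕ → ℕ → Rgen := fun i j =>
  if i < n ∧ j < n ∧ ¬(a ≤ i ∧ j < b) then MvPolynomial.X (false, i, j) else 0

/-- The coefficient ring for the generic band pair: polynomials over `ℂ` in variables
`a_{ij}`. -/
abbrev Rband : Type := MvPolynomial (ℕ × ℕ) ℂ

/-- The generic band entries `a_{ij}` (1-based). -/
def genA : ℕ → ℕ → Rband := fun i j => MvPolynomial.X (i, j)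

/-- The band matrix `X` (0-based indices) built from the entries `a_{ij}` (1-based):
`X_{i, n-k+i-1+s} = a_{s,i}` for `1 ≤ i ≤ k`, `1 ≤ s ≤ k+1-i` (1-based). -/
def bandX {α : Type*} [Zero α] (n k : ℕ) (a : ℕ → ℕ → α) : ℕ → ℕ → α := fun i j =>
  if i < k ∧ n - k + i ≤ j ∧ j < n then a (j + k + 1 - n - i) (i + 1) else 0

/-- The band matrix `Y` (0-based indices) built from the entries `a_{ij}` (1-based):
`Y_{ij} = a_{k+1-i+j, i}` for `max(1, i-k) ≤ j ≤ i` (1-based), `0` otherwise. -/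
def bandY {α : Type*} [Zero α] (n k : ℕ) (a : ℕ → ℕ → α) : ℕ → ℕ → α := fun i j =>
  if j ≤ i ∧ i ≤ j + k ∧ i < n then a (k + 1 + j - i) (i + 1) else 0

/-- Top-left `k × k` block of `X * Y⁻¹`. -/
def bandUblock (n k : ℕ) (h : k ≤ n) (Xm Ym : Matrix (Fin n) (Fin n) ℂ) :
    Matrix (Fin k) (Fin k) ℂ :=
  Matrix.of fun i j => (Xm * Ym⁻¹) (Fin.castLE h i) (Fin.castLE h j)

/-- `K(A;u) = [u, Au, …, A^{k-1}u]`. -/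
def Kmat (k : ℕ) (A : Matrix (Fin k) (Fin k) ℂ) (u : Fin k → ℂ) :
    Matrix (Fin k) (Fin k) ℂ :=
  Matrix.of fun i j => (A ^ (j : ℕ)).mulVec u i

/-- `K1(A;u,v) = [v, u, Au, …, A^{k-2}u]`. -/
def K1mat (k : ℕ) (A : Matrix (Fin k) (Fin k) ℂ) (u v : Fin k → ℂ) :
    Matrix (Fin k) (Fin k) ℂ :=
  Matrix.of fun i j => if (j : ℕ) = 0 then v i else (A ^ ((j : ℕ) - 1)).mulVec u i

/-- `K2(A;u,v) = [Av, u, Au, …, A^{k-2}u]`. -/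
def K2mat (k : ℕ) (A : Matrix (Fin k) (Fin k) ℂ) (u v : Fin k → ℂ) :
    Matrix (Fin k) (Fin k) ℂ :=
  Matrix.of fun i j => if (j : ℕ) = 0 then A.mulVec v i else (A ^ ((j : ℕ) - 1)).mulVec u i

/-- `w`: the last row of the classical adjoint of `K1(A;u,v)`. -/
def wRow (k : ℕ) (A : Matrix (Fin k) (Fin k) ℂ) (u v : Fin k → ℂ) : Fin k → ℂ :=
  fun j => (K1mat k A u v).adjugate ⟨k - 1, by have := j.isLt; omega⟩ j

/-- `K*(A;u,v)`: the matrix with rows `w, wA, …, wA^{k-1}`. -/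
def Kstar (k : ℕ) (A : Matrix (Fin k) (Fin k) ℂ) (u v : Fin k → ℂ) :
    Matrix (Fin k) (Fin k) ℂ :=
  Matrix.of fun i j => Matrix.vecMul (wRow k A u v) (A ^ (i : ℕ)) j

/-- Extend a `k × k` matrix by zero to an `ℕ`-indexed family of entries. -/
def extMat {α : Type*} [Zero α] (k : ℕ) (M : Matrix (Fin k) (Fin k) α) : ℕ → ℕ → α :=
  fun i j => if h : i < k ∧ j < k then M ⟨i, h.1⟩ ⟨j, h.2⟩ else 0

/-- for a staircase pair of complex matrices with `Y` and `Y2` invertible,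
`det(λY + μX) = λ^(n-k) · det Y · det(λ 1_k + μ U)`. -/
theorem statement0 (n k b : ℕ) (hk : 2 ≤ k) (hn : k + b ≤ n)
    (X Y : ℕ → ℕ → ℂ)
    (hX : ∀ i j : ℕ, (k + b ≤ i ∨ j < b) → X i j = 0)
    (hY : ∀ i j : ℕ, k + b ≤ i → j < b → Y i j = 0)
    (hYinv : IsUnit (toSq n Y).det)
    (hY2inv : IsUnit (blockY2 n k b hn (toSq n Y)).det) :
    ∀ lam mu : ℂ,
      (lam • toSq n Y + mu • toSq n X).det
        = lam ^ (n - k) * (toSq n Y).det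
          * (lam • (1 : Matrix (Fin k) (Fin k) ℂ)
              + mu • blockU n k b hn (toSq n X) (toSq n Y)).det := by
  intro lam mu
  set Xm := toSq n X with hXm
  set Ym := toSq n Y with hYm
  have hXme : ∀ i j : Fin n, ((k + b ≤ (i : ℕ)) ∨ ((j : ℕ) < b)) → Xm i j = 0 := by
    intro i j h; exact hX i j h
  have hYme : ∀ i j : Fin n, k + b ≤ (i : ℕ) → (j : ℕ) < b → Ym i j = 0 := by
    intro i j h1 h2; exact hY i j h1 h2
  by_cases hlam : lam = 0
  · -- case lam = 0
    subst hlam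
    by_cases hnk : n = k
    · -- n = k forces b = 0
      have hb : b = 0 := by omega
      subst hb
      subst hnk
      have hz : ((Matrix.of fun (i : Fin n) (j : Fin 0) =>
            Ym (Fin.castLE (by omega) i) (Fin.castLE (by omega) j))
          * (blockY2 n n 0 hn Ym)⁻¹
          * (Matrix.of fun (i : Fin 0) (j : Fin n) =>
              (Xm * Ym⁻¹) ⟨n + (i : ℕ), by have := i.isLt; omega⟩ (Fin.castLE (by omega) j))
          : Matrix (Fin n) (Fin n) ℂ) = 0 := by
        ext i j
        simp [Matrix.mul_apply]
      have hU : blockU n n 0 hn Xm Ym = Xm * Ym⁻¹ := by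
        rw [blockU, hz, sub_zero]
        ext i j
        have h1 : Fin.castLE (by omega : n ≤ n) i = i := by
          apply Fin.ext; simp
        have h2 : Fin.castLE (by omega : n ≤ n) j = j := by
          apply Fin.ext; simp
        simp [h1, h2]
      have hnk0 : n - n = 0 := by omega
      rw [hU, hnk0, pow_zero, one_mul, zero_smul, zero_smul, zero_add, zero_add,
        Matrix.det_smul, Matrix.det_smul, Matrix.det_mul, Matrix.det_nonsing_inv]
      rw [Fintype.card_fin]
      ring_nf
      rw [mul_assoc (mu ^ n * Xm.det), Ring.mul_inverse_cancel _ hYinv, mul_one]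
    · -- n > k : both sides vanish
      have hnk' : k < n := lt_of_le_of_ne (by omega) (Ne.symm hnk)
      have hXdet : Xm.det = 0 := by
        by_cases hb : b = 0
        · refine Matrix.det_eq_zero_of_row_eq_zero ⟨n - 1, by omega⟩ (fun j => ?_)
          exact hXme _ j (Or.inl (by simp; omega))
        · refine Matrix.det_eq_zero_of_column_eq_zero ⟨0, by omega⟩ (fun i => ?_)
          exact hXme i _ (Or.inr (by simp; omega))
      have h0 : (0 : ℂ) ^ (n - k) = 0 := by
        apply zero_pow; omega
      rw [zero_smul, zero_add, Matrix.det_smul, hXdet, h0]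
      ring
  · -- main case : lam ≠ 0
    -- the equivalence Fin k ⊕ Fin b ⊕ Fin (n - (k+b)) ≃ Fin n
    have h1 : k + b + (n - (k + b)) = n := by omega
    set ee : (Fin k ⊕ Fin b) ⊕ Fin (n - (k + b)) ≃ Fin n :=
      (((Equiv.sumCongr (finSumFinEquiv : Fin k ⊕ Fin b ≃ Fin (k + b))
          (Equiv.refl (Fin (n - (k + b))))).trans finSumFinEquiv).trans (finCongr h1)) with hee
    have he1 : ∀ i : Fin k, (ee (Sum.inl (Sum.inl i)) : ℕ) = (i : ℕ) := by
      intro i; simp [hee]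
    have he2 : ∀ i : Fin b, (ee (Sum.inl (Sum.inr i)) : ℕ) = k + (i : ℕ) := by
      intro i; simp [hee]
    have he3 : ∀ i : Fin (n - (k + b)), (ee (Sum.inr i) : ℕ) = k + b + (i : ℕ) := by
      intro i; simp [hee]
    haveI : Invertible Ym := Ym.invertibleOfIsUnitDet hYinv
    set W : Matrix (Fin n) (Fin n) ℂ := Xm * Ym⁻¹ with hW
    have hWY : W * Ym = Xm := Matrix.inv_mul_cancel_right_of_invertible (A := Ym) Xm
    have hWrow : ∀ i j : Fin n, k + b ≤ (i : ℕ) → W i j = 0 := by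
      intro i j hi
      rw [hW, Matrix.mul_apply]
      apply Finset.sum_eq_zero
      intro l _
      rw [hXme i l (Or.inl hi), zero_mul]
    -- the blocks
    set P : Matrix (Fin k ⊕ Fin b) (Fin k ⊕ Fin b) ℂ :=
      Matrix.of (fun i j => W (ee (Sum.inl i)) (ee (Sum.inl j))) with hP
    set Qm : Matrix (Fin k ⊕ Fin b) (Fin (n - (k + b))) ℂ :=
      Matrix.of (fun i j => W (ee (Sum.inl i)) (ee (Sum.inr j))) with hQm
    set Cm : Matrix (Fin k ⊕ Fin b) (Fin k) ℂ :=
      Matrix.of (fun i j => W (ee (Sum.inl i)) (ee (Sum.inl (Sum.inl j)))) with hCm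
    set W21m : Matrix (Fin b) (Fin k) ℂ :=
      Matrix.of (fun i j => W (ee (Sum.inl (Sum.inr i))) (ee (Sum.inl (Sum.inl j)))) with hW21m
    set Dm : Matrix (Fin k ⊕ Fin b) (Fin b) ℂ :=
      Matrix.of (fun i j => W (ee (Sum.inl i)) (ee (Sum.inl (Sum.inr j)))) with hDm
    set Y1m : Matrix (Fin k) (Fin b) ℂ :=
      Matrix.of (fun i j => Ym (Fin.castLE (by omega) i) (Fin.castLE (by omega) j)) with hY1m
    set Y2m : Matrix (Fin b) (Fin b) ℂ := blockY2 n k b hn Ym with hY2m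
    haveI : Invertible Y2m := Y2m.invertibleOfIsUnitDet hY2inv
    -- the fundamental relation  Cm * Y1m + Dm * Y2m = 0
    have hrel : Cm * Y1m + Dm * Y2m = 0 := by
      ext i j
      have hcol : ((Fin.castLE (by omega : b ≤ n) j : Fin n) : ℕ) < b := by
        simp
      have hXz : (W * Ym) (ee (Sum.inl i)) (Fin.castLE (by omega) j) = 0 := by
        rw [hWY]; exact hXme _ _ (Or.inr hcol)
      rw [Matrix.mul_apply] at hXz
      have hsum : ∑ l : Fin n, W (ee (Sum.inl i)) l * Ym l (Fin.castLE (by omega) j)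
          = ∑ x : (Fin k ⊕ Fin b) ⊕ Fin (n - (k + b)),
              W (ee (Sum.inl i)) (ee x) * Ym (ee x) (Fin.castLE (by omega) j) :=
        (Equiv.sum_comp ee fun l => W (ee (Sum.inl i)) l * Ym l (Fin.castLE (by omega) j)).symm
      rw [hsum, Fintype.sum_sum_type, Fintype.sum_sum_type] at hXz
      have hz3 : ∑ x : Fin (n - (k + b)),
          W (ee (Sum.inl i)) (ee (Sum.inr x)) * Ym (ee (Sum.inr x)) (Fin.castLE (by omega) j)
          = 0 := by
        apply Finset.sum_eq_zero
        intro x _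
        rw [hYme _ _ (by rw [he3]; omega) hcol, mul_zero]
      rw [hz3, add_zero] at hXz
      have hY1eq : ∀ l : Fin k, Ym (ee (Sum.inl (Sum.inl l))) (Fin.castLE (by omega) j)
          = Y1m l j := by
        intro l
        have h' : ee (Sum.inl (Sum.inl l)) = Fin.castLE (by omega : k ≤ n) l :=
          Fin.ext (by simp [he1])
        rw [h']
        rfl
      have hY2eq : ∀ l : Fin b, Ym (ee (Sum.inl (Sum.inr l))) (Fin.castLE (by omega) j)
          = Y2m l j := by
        intro l
        have h' : ee (Sum.inl (Sum.inr l)) = (⟨k + (l : ℕ), by have := l.isLt; omega⟩ : Fin n) :=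
          Fin.ext (by simp [he2])
        rw [h']
        rfl
      simp only [hY1eq, hY2eq] at hXz
      simp only [Matrix.add_apply, Matrix.mul_apply, Matrix.zero_apply]
      exact hXz
    have hDmeq : Dm = -(Cm * Y1m * Y2m⁻¹) := by
      have h2 : Dm * Y2m = -(Cm * Y1m) := eq_neg_of_add_eq_zero_right hrel
      calc Dm = Dm * Y2m * Y2m⁻¹ :=
            (Matrix.mul_inv_cancel_right_of_invertible (A := Y2m) Dm).symm
        _ = -(Cm * Y1m) * Y2m⁻¹ := by rw [h2]
        _ = -(Cm * Y1m * Y2m⁻¹) := by rw [Matrix.neg_mul]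
    set Rm : Matrix (Fin k) (Fin k ⊕ Fin b) ℂ :=
      Matrix.of (fun i => Sum.elim (fun j => (1 : Matrix (Fin k) (Fin k) ℂ) i j)
        (fun j => -((Y1m * Y2m⁻¹) i j))) with hRm
    -- factorization P = Cm * Rm
    have hPfac : P = Cm * Rm := by
      ext i j
      cases j with
      | inl j =>
        rw [Matrix.mul_apply]
        have : ∀ l : Fin k, Cm i l * Rm l (Sum.inl j)
            = if l = j then Cm i l else 0 := by
          intro l
          by_cases h : l = j <;>
            simp [hRm, Matrix.one_apply, h]
        rw [Finset.sum_congr rfl (fun l _ => this l), Finset.sum_ite_eq' Finset.univ j]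
        simp [hP, hCm]
      | inr j =>
        rw [Matrix.mul_apply]
        have hPij : P i (Sum.inr j) = Dm i j := rfl
        rw [hPij, hDmeq]
        have : ∀ l : Fin k, Cm i l * Rm l (Sum.inr j)
            = -(Cm i l * (Y1m * Y2m⁻¹) l j) := by
          intro l; exact mul_neg _ _
        rw [Finset.sum_congr rfl (fun l _ => this l), Finset.sum_neg_distrib]
        rw [Matrix.neg_apply, Matrix.mul_assoc, Matrix.mul_apply]
    -- Rm * Cm = U
    have hRC : Rm * Cm = blockU n k b hn Xm Ym := by
      ext i j
      rw [Matrix.mul_apply, Fintype.sum_sum_type]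
      have hfirst : ∑ l : Fin k, Rm i (Sum.inl l) * Cm (Sum.inl l) j
          = W (ee (Sum.inl (Sum.inl i))) (ee (Sum.inl (Sum.inl j))) := by
        rw [Finset.sum_eq_single i]
        · simp [hRm, Matrix.one_apply, hCm]
        · intro l _ hl
          simp [hRm, Matrix.one_apply, Ne.symm hl]
        · intro h; exact absurd (Finset.mem_univ i) h
      have hsecond : ∑ l : Fin b, Rm i (Sum.inr l) * Cm (Sum.inr l) j
          = -((Y1m * Y2m⁻¹ * W21m) i j) := by
        rw [Matrix.mul_apply]
        rw [← Finset.sum_neg_distrib]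
        apply Finset.sum_congr rfl
        intro l _
        exact neg_mul _ _
      rw [hfirst, hsecond, blockU]
      have hWcast : W (ee (Sum.inl (Sum.inl i))) (ee (Sum.inl (Sum.inl j)))
          = (Xm * Ym⁻¹) (Fin.castLE (by omega) i) (Fin.castLE (by omega) j) := by
        have h1' : ee (Sum.inl (Sum.inl i)) = Fin.castLE (by omega : k ≤ n) i :=
          Fin.ext (by simp [he1])
        have h2' : ee (Sum.inl (Sum.inl j)) = Fin.castLE (by omega : k ≤ n) j :=
          Fin.ext (by simp [he1])
        rw [hW, h1', h2']
      have hW21eq : W21m = Matrix.of (fun (i : Fin b) (j : Fin k) =>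
          (Xm * Ym⁻¹) ⟨k + (i : ℕ), by have := i.isLt; omega⟩ (Fin.castLE (by omega) j)) := by
        ext i j
        show W _ _ = (Xm * Ym⁻¹) _ _
        have h1' : ee (Sum.inl (Sum.inr i)) = (⟨k + (i : ℕ), by have := i.isLt; omega⟩ : Fin n) :=
          Fin.ext (by simp [he2])
        have h2' : ee (Sum.inl (Sum.inl j)) = Fin.castLE (by omega : k ≤ n) j :=
          Fin.ext (by simp [he1])
        rw [hW, h1', h2']
      rw [hWcast, ← hW21eq]
      try simp [Matrix.sub_apply, sub_eq_add_neg]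
      rfl
    -- determinant computation
    set c : ℂ := mu / lam with hc
    have hlc : lam * c = mu := by rw [mul_comm, div_mul_cancel₀ mu hlam]
    have hstep1 : lam • Ym + mu • Xm = (lam • (1 : Matrix (Fin n) (Fin n) ℂ) + mu • W) * Ym := by
      rw [Matrix.add_mul, Matrix.smul_mul, Matrix.smul_mul, Matrix.one_mul, Matrix.mul_assoc,
        Matrix.nonsing_inv_mul Ym hYinv, Matrix.mul_one]
    have hstep2 : lam • (1 : Matrix (Fin n) (Fin n) ℂ) + mu • W
        = lam • ((1 : Matrix (Fin n) (Fin n) ℂ) + c • W) := by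
      rw [smul_add, smul_smul, hlc]
    have hsub : ((1 : Matrix (Fin n) (Fin n) ℂ) + c • W).submatrix ee ee
        = Matrix.fromBlocks (1 + c • P) (c • Qm) 0 1 := by
      ext i j
      cases i with
      | inl i =>
        cases j with
        | inl j =>
          simp only [Matrix.submatrix_apply, Matrix.add_apply, Matrix.smul_apply,
            Matrix.fromBlocks_apply₁₁, Matrix.one_apply, EmbeddingLike.apply_eq_iff_eq,
            Sum.inl.injEq]
          rfl
        | inr j =>
          simp only [Matrix.submatrix_apply, Matrix.add_apply, Matrix.smul_apply,
            Matrix.fromBlocks_apply₁₂, Matrix.one_apply, EmbeddingLike.apply_eq_iff_eq]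
          rw [if_neg (by simp), zero_add]
          rfl
      | inr i =>
        have hWz : ∀ j', W (ee (Sum.inr i)) j' = 0 := by
          intro j'
          exact hWrow _ _ (by rw [he3]; omega)
        cases j with
        | inl j =>
          simp only [Matrix.submatrix_apply, Matrix.add_apply, Matrix.smul_apply,
            Matrix.fromBlocks_apply₂₁, Matrix.one_apply, EmbeddingLike.apply_eq_iff_eq]
          rw [if_neg (by simp), hWz]
          simp
        | inr j =>
          simp only [Matrix.submatrix_apply, Matrix.add_apply, Matrix.smul_apply,
            Matrix.fromBlocks_apply₂₂, Matrix.one_apply, EmbeddingLike.apply_eq_iff_eq,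
            Sum.inr.injEq]
          rw [hWz]
          simp
    have hdetW : ((1 : Matrix (Fin n) (Fin n) ℂ) + c • W).det = (1 + c • P).det := by
      rw [← Matrix.det_submatrix_equiv_self ee, hsub, Matrix.det_fromBlocks_zero₂₁,
        Matrix.det_one, mul_one]
    have hdetP : (1 + c • P).det
        = ((1 : Matrix (Fin k) (Fin k) ℂ) + c • blockU n k b hn Xm Ym).det := by
      rw [hPfac, ← Matrix.smul_mul, Matrix.det_one_add_mul_comm, Matrix.mul_smul, hRC]
    have hfink : ((lam • (1 : Matrix (Fin k) (Fin k) ℂ)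
        + mu • blockU n k b hn Xm Ym)).det
        = lam ^ k * ((1 : Matrix (Fin k) (Fin k) ℂ) + c • blockU n k b hn Xm Ym).det := by
      rw [show lam • (1 : Matrix (Fin k) (Fin k) ℂ) + mu • blockU n k b hn Xm Ym
          = lam • ((1 : Matrix (Fin k) (Fin k) ℂ) + c • blockU n k b hn Xm Ym) by
            rw [smul_add, smul_smul, hlc]]
      rw [Matrix.det_smul, Fintype.card_fin]
    rw [hstep1, Matrix.det_mul, hstep2, Matrix.det_smul, Fintype.card_fin, hdetW, hdetP, hfink]
    have hpow : lam ^ n = lam ^ (n - k) * lam ^ k := by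
      rw [← pow_add]; congr 1; omega
    rw [hpow]
    ring

end
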